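/- Let $A \subseteq \mathbf{R}^{n+1}$ be a closed set and $a \in A$ a point admitting an exterior unit normal. Then the exterior unit normal of $A$ at $a$ is unique: if both $u$ and $v$ in $\mathbf{S}^n$ are exterior normals of $A$ at $a$, then $u = v$. -/

import Mathlib

open Set Metric Filter MeasureTheory
open scoped Topology ENNReal RealInnerProductSpace Pointwise

/-- Uniqueness of the exterior unit normal (in the Lebesgue density sense) of a
closed set at a point. -/
theorem exterior_normal_unique (n : ℕ)
    (A : Set (EuclideanSpace ℝ (Fin (n+1)))) (hA : IsClosed A)
    (a : EuclideanSpace ℝ (Fin (n+1))) (ha : a ∈ A)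
    (u v : EuclideanSpace ℝ (Fin (n+1))) (hu : ‖u‖ = 1) (hv : ‖v‖ = 1)
    (hu1 : Tendsto (fun r : ℝ =>
        volume ({z : EuclideanSpace ℝ (Fin (n+1)) | 0 < ⟪z - a, u⟫} ∩ ball a r ∩ A)
          / ENNReal.ofReal (r ^ (n+1))) (𝓝[>] 0) (𝓝 0))
    (hu2 : Tendsto (fun r : ℝ =>
        volume (({z : EuclideanSpace ℝ (Fin (n+1)) | ⟪z - a, u⟫ < 0} ∩ ball a r) \ A)
          / ENNReal.ofReal (r ^ (n+1))) (𝓝[>] 0) (𝓝 0))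
    (hv1 : Tendsto (fun r : ℝ =>
        volume ({z : EuclideanSpace ℝ (Fin (n+1)) | 0 < ⟪z - a, v⟫} ∩ ball a r ∩ A)
          / ENNReal.ofReal (r ^ (n+1))) (𝓝[>] 0) (𝓝 0))
    (hv2 : Tendsto (fun r : ℝ =>
        volume (({z : EuclideanSpace ℝ (Fin (n+1)) | ⟪z - a, v⟫ < 0} ∩ ball a r) \ A)
          / ENNReal.ofReal (r ^ (n+1))) (𝓝[>] 0) (𝓝 0)) :
    u = v := by
  by_contra huv
  -- the vector `w = v - u` makes a negative inner product with `u` and positive with `v`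
  have hvu1 : ⟪v, u⟫ < 1 := (inner_lt_one_iff_real_of_norm_eq_one hv hu).2 fun e => huv e.symm
  have huu : ⟪u, u⟫ = 1 := by
    rw [real_inner_self_eq_norm_sq, hu]; norm_num
  have hvv : ⟪v, v⟫ = 1 := by
    rw [real_inner_self_eq_norm_sq, hv]; norm_num
  have hwu : ⟪v - u, u⟫ < 0 := by rw [inner_sub_left]; linarith
  have hwv : 0 < ⟪v - u, v⟫ := by
    rw [inner_sub_left]
    have h2 : ⟪v, u⟫ = ⟪u, v⟫ := real_inner_comm u v
    linarith
  -- the open "wedge" inside the unit ball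
  set s : Set (EuclideanSpace ℝ (Fin (n+1))) :=
    {z | ⟪z, u⟫ < 0 ∧ 0 < ⟪z, v⟫} ∩ ball 0 1 with hs
  have hsopen : IsOpen s := by
    refine IsOpen.inter ?_ isOpen_ball
    have e : {z : EuclideanSpace ℝ (Fin (n+1)) | ⟪z, u⟫ < 0 ∧ 0 < ⟪z, v⟫} =
        {z : EuclideanSpace ℝ (Fin (n+1)) | ⟪z, u⟫ < 0} ∩ {z | 0 < ⟪z, v⟫} := rfl
    rw [e]
    exact ((isOpen_lt (continuous_id'.inner continuous_const) continuous_const).inter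
      (isOpen_lt continuous_const (continuous_id'.inner continuous_const)))
  have hw0 : v - u ≠ 0 := sub_ne_zero.2 fun e => huv e.symm
  have hnw : (0:ℝ) < ‖v - u‖ := norm_pos_iff.2 hw0
  have hcinv : (0:ℝ) < (2 * ‖v - u‖)⁻¹ := by positivity
  have hsne : s.Nonempty := by
    refine ⟨(2 * ‖v - u‖)⁻¹ • (v - u), ⟨?_, ?_⟩, ?_⟩
    · show ⟪(2 * ‖v - u‖)⁻¹ • (v - u), u⟫ < 0
      rw [real_inner_smul_left]
      exact mul_neg_of_pos_of_neg hcinv hwu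
    · show 0 < ⟪(2 * ‖v - u‖)⁻¹ • (v - u), v⟫
      rw [real_inner_smul_left]
      exact mul_pos hcinv hwv
    · rw [mem_ball_zero_iff, norm_smul, Real.norm_eq_abs, abs_of_pos hcinv, mul_comm,
        ← div_eq_mul_inv, div_lt_one (by positivity)]
      linarith
  have hcpos : 0 < volume s := hsopen.measure_pos volume hsne
  -- scaling: the wedge at `a` with radius `r` has measure `r^(n+1) * volume s`
  have hscale : ∀ r : ℝ, 0 < r →
      volume ({z : EuclideanSpace ℝ (Fin (n+1)) | ⟪z - a, u⟫ < 0} ∩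
          {z | 0 < ⟪z - a, v⟫} ∩ ball a r)
        = ENNReal.ofReal (r ^ (n+1)) * volume s := by
    intro r hr
    have hrinv : (0:ℝ) < r⁻¹ := inv_pos.2 hr
    have hset : {z : EuclideanSpace ℝ (Fin (n+1)) | ⟪z - a, u⟫ < 0} ∩
        {z | 0 < ⟪z - a, v⟫} ∩ ball a r = (fun z => z + (-a)) ⁻¹' (r • s) := by
      ext z
      simp only [mem_inter_iff, mem_setOf_eq, mem_ball, mem_preimage,
        mem_smul_set_iff_inv_smul_mem₀ hr.ne', hs, mem_inter_iff, mem_setOf_eq,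
        mem_ball_zero_iff, real_inner_smul_left, norm_smul, Real.norm_eq_abs, abs_inv,
        abs_of_pos hr, ← sub_eq_add_neg, dist_eq_norm, sub_zero]
      have h1 : ∀ t : ℝ, (r⁻¹ * t < 0 ↔ t < 0) := by
        intro t
        rw [← neg_pos, ← mul_neg, mul_pos_iff_of_pos_left hrinv, neg_pos]
      have h2 : ∀ t : ℝ, (0 < r⁻¹ * t ↔ 0 < t) := fun t => mul_pos_iff_of_pos_left hrinv
      simp only [h1, h2]
      rw [inv_mul_eq_div, div_lt_one hr]
    rw [hset, measure_preimage_add_right,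
      Measure.addHaar_smul_of_nonneg volume hr.le, finrank_euclideanSpace_fin]
  -- the wedge is covered by the two "bad" sets
  have hsub : ∀ r : ℝ,
      {z : EuclideanSpace ℝ (Fin (n+1)) | ⟪z - a, u⟫ < 0} ∩
          {z | 0 < ⟪z - a, v⟫} ∩ ball a r ⊆
        ({z : EuclideanSpace ℝ (Fin (n+1)) | 0 < ⟪z - a, v⟫} ∩ ball a r ∩ A) ∪
          (({z : EuclideanSpace ℝ (Fin (n+1)) | ⟪z - a, u⟫ < 0} ∩ ball a r) \ A) := by
    rintro r z ⟨⟨h1, h2⟩, h3⟩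
    by_cases hzA : z ∈ A
    · exact Or.inl ⟨⟨h2, h3⟩, hzA⟩
    · exact Or.inr ⟨⟨h1, h3⟩, hzA⟩
  -- hence `volume s` is bounded by quantities tending to `0`
  have hbound : ∀ r : ℝ, 0 < r → volume s ≤
      volume ({z : EuclideanSpace ℝ (Fin (n+1)) | 0 < ⟪z - a, v⟫} ∩ ball a r ∩ A)
          / ENNReal.ofReal (r ^ (n+1)) +
        volume (({z : EuclideanSpace ℝ (Fin (n+1)) | ⟪z - a, u⟫ < 0} ∩ ball a r) \ A)
          / ENNReal.ofReal (r ^ (n+1)) := by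
    intro r hr
    have hR0 : ENNReal.ofReal (r ^ (n+1)) ≠ 0 := by
      simp [ENNReal.ofReal_eq_zero, not_le, pow_pos hr]
    have hRT : ENNReal.ofReal (r ^ (n+1)) ≠ ∞ := ENNReal.ofReal_ne_top
    have h1 : volume s = volume ({z : EuclideanSpace ℝ (Fin (n+1)) | ⟪z - a, u⟫ < 0} ∩
        {z | 0 < ⟪z - a, v⟫} ∩ ball a r) / ENNReal.ofReal (r ^ (n+1)) := by
      rw [hscale r hr, mul_comm, mul_div_assoc, ENNReal.div_self hR0 hRT, mul_one]
    rw [h1, ← ENNReal.add_div]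
    exact ENNReal.div_le_div_right
      (le_trans (measure_mono (hsub r)) (measure_union_le _ _)) _
  have htend : Tendsto (fun r : ℝ =>
      volume ({z : EuclideanSpace ℝ (Fin (n+1)) | 0 < ⟪z - a, v⟫} ∩ ball a r ∩ A)
          / ENNReal.ofReal (r ^ (n+1)) +
        volume (({z : EuclideanSpace ℝ (Fin (n+1)) | ⟪z - a, u⟫ < 0} ∩ ball a r) \ A)
          / ENNReal.ofReal (r ^ (n+1))) (𝓝[>] 0) (𝓝 0) := by
    simpa using hv1.add hu2
  have hle : volume s ≤ 0 :=
    ge_of_tendsto htend (eventually_nhdsWithin_of_forall fun r hr => hbound r hr)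
  exact absurd hle hcpos.not_ge
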